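/- arXiv:1502.05579 — 3 statements merged into one kernel-verified Lean document; each statement's English description precedes it below -/
import Mathlib

section
/- Let q ∈ ℂ, and let θ_j ≠ θ_k be two angles in (0, π/2). Consider z_j = q + r_j e^{iθ_j} with r_j ≥ R and z_k = q + r_k e^{iθ_k} with r_k ≥ R. Then there exist R > 0 and δ > 0 (depending only on q, θ_j, θ_k) such that |1/z_j - 1/z_k| ≥ δ / |z_j| for all such z_j, z_k with |z_j|, |z_k| ≥ R. -/
theorem stmt14 (q : ℂ) (θj θk : ℝ)
    (hθj : θj ∈ Set.Ioo 0 (Real.pi / 2)) (hθk : θk ∈ Set.Ioo 0 (Real.pi / 2))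
    (hne : θj ≠ θk) :
    ∃ R > (0 : ℝ), ∃ δ > (0 : ℝ), ∀ rj rk : ℝ, R ≤ rj → R ≤ rk →
      δ / ‖q + (rj : ℂ) * Complex.exp (θj * Complex.I)‖
        ≤ ‖(q + (rj : ℂ) * Complex.exp (θj * Complex.I))⁻¹
            - (q + (rk : ℂ) * Complex.exp (θk * Complex.I))⁻¹‖ := by
  obtain ⟨hj0, hj1⟩ := hθj
  obtain ⟨hk0, hk1⟩ := hθk
  have hpi := Real.pi_pos
  have hsin : Real.sin (θk - θj) ≠ 0 := by
    intro h
    rw [Real.sin_eq_zero_iff_of_lt_of_lt (by linarith) (by linarith)] at h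
    exact hne (by linarith)
  set s : ℝ := |Real.sin (θk - θj)| with hsdef
  have hs0 : 0 < s := abs_pos.mpr hsin
  have haq : (0 : ℝ) ≤ ‖q‖ := norm_nonneg q
  refine ⟨‖q‖ + 1, by positivity, s / (‖q‖ + 1), by positivity, ?_⟩
  intro rj rk hrj hrk
  set zj : ℂ := q + (rj : ℂ) * Complex.exp (θj * Complex.I) with hzj
  set zk : ℂ := q + (rk : ℂ) * Complex.exp (θk * Complex.I) with hzk
  have hrk1 : (1 : ℝ) ≤ rk := by linarith
  have hrj1 : (1 : ℝ) ≤ rj := by linarith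
  have habsk : ‖(rk : ℂ) * Complex.exp (θk * Complex.I)‖ = rk := by
    rw [norm_mul, Complex.norm_exp_ofReal_mul_I, mul_one, Complex.norm_real, Real.norm_eq_abs,
      abs_of_nonneg (by linarith)]
  have habsj : ‖(rj : ℂ) * Complex.exp (θj * Complex.I)‖ = rj := by
    rw [norm_mul, Complex.norm_exp_ofReal_mul_I, mul_one, Complex.norm_real, Real.norm_eq_abs,
      abs_of_nonneg (by linarith)]
  have hzk1 : (1 : ℝ) ≤ ‖zk‖ := by
    have he : (rk : ℂ) * Complex.exp (θk * Complex.I) = zk + (-q) := by rw [hzk]; ring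
    have h := norm_add_le zk (-q)
    rw [← he, habsk, norm_neg] at h
    linarith
  have hzj1 : (1 : ℝ) ≤ ‖zj‖ := by
    have he : (rj : ℂ) * Complex.exp (θj * Complex.I) = zj + (-q) := by rw [hzj]; ring
    have h := norm_add_le zj (-q)
    rw [← he, habsj, norm_neg] at h
    linarith
  have hzkub : ‖zk‖ ≤ (‖q‖ + 1) * rk := by
    have h := norm_add_le q ((rk : ℂ) * Complex.exp (θk * Complex.I))
    rw [habsk] at h
    have : ‖q‖ + rk ≤ (‖q‖ + 1) * rk := by nlinarith
    linarith
  have hzjne : zj ≠ 0 := by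
    intro h; rw [h] at hzj1; simp at hzj1; linarith
  have hzkne : zk ≠ 0 := by
    intro h; rw [h] at hzk1; simp at hzk1; linarith
  -- key lower bound for |zj - zk|
  have hexp : Complex.exp (θj * Complex.I) * Complex.exp ((↑(θk - θj)) * Complex.I)
      = Complex.exp (θk * Complex.I) := by
    rw [← Complex.exp_add]
    congr 1
    push_cast
    ring
  have h1 : zj - zk = Complex.exp (θj * Complex.I) *
      ((rj : ℂ) - (rk : ℂ) * Complex.exp ((↑(θk - θj)) * Complex.I)) := by
    rw [hzj, hzk, ← hexp]
    ring
  have him : ((rj : ℂ) - (rk : ℂ) * Complex.exp ((↑(θk - θj)) * Complex.I)).im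
      = -(rk * Real.sin (θk - θj)) := by
    simp only [Complex.sub_im, Complex.mul_im, Complex.exp_ofReal_mul_I_im,
      Complex.exp_ofReal_mul_I_re, Complex.ofReal_re, Complex.ofReal_im]
    ring
  have key : rk * s ≤ ‖zj - zk‖ := by
    rw [h1, norm_mul, Complex.norm_exp_ofReal_mul_I, one_mul]
    calc rk * s = |((rj : ℂ) - (rk : ℂ) * Complex.exp ((↑(θk - θj)) * Complex.I)).im| := by
          rw [him, abs_neg, abs_mul, abs_of_nonneg (by linarith : (0:ℝ) ≤ rk)]
      _ ≤ _ := Complex.abs_im_le_norm _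
  have hdiff : zj⁻¹ - zk⁻¹ = (zk - zj) * (zj * zk)⁻¹ := by
    field_simp
  rw [hdiff, norm_mul, norm_inv, norm_mul, norm_sub_rev]
  set a : ℝ := ‖zj‖
  set b : ℝ := ‖zk‖
  set d : ℝ := ‖zj - zk‖
  have ha : (0 : ℝ) < a := by linarith
  have hb : (0 : ℝ) < b := by linarith
  rw [div_div, ← div_eq_mul_inv, div_le_div_iff₀ (by positivity) (by positivity)]
  nlinarith [mul_le_mul_of_nonneg_left hzkub (mul_nonneg hs0.le ha.le),
    mul_le_mul_of_nonneg_left key (mul_nonneg (by positivity : (0:ℝ) ≤ ‖q‖ + 1) ha.le)]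
end

section
/- Let a_1, ..., a_ℓ be nonnegative integers with ℓ ≥ 4 even. For 2 ≤ k ≤ ℓ/2 and J ⊆ {1,...,k}, define s_k(J) = Σ_{j=2}^{k} [χ_J(j) a_{2j} + (1 - χ_J(j))(a_{2j+1} + χ_J(j-1) min{a_{2j-1}, a_{2j}})], and set c_k = min{a_2 + s_k(J) : 1, k ∈ J}, d_k = min{a_3 + s_k(J) : 1 ∉ J, k ∈ J}, f_k = min{a_2 + s_k(J) : 1 ∈ J, k ∉ J}, g_k = min{a_3 + s_k(J) : 1, k ∉ J}. Then c_k + g_k ≤ d_k + f_k for every 2 ≤ k ≤ ℓ/2. -/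
/-- `s_k(J)` from the appendix of the paper. -/
noncomputable def sFun (a : ℕ → ℕ) (k : ℕ) (J : Finset ℕ) : ℕ :=
  ∑ j ∈ Finset.Icc 2 k,
    if j ∈ J then a (2 * j)
    else a (2 * j + 1) + if j - 1 ∈ J then min (a (2 * j - 1)) (a (2 * j)) else 0

noncomputable def cVal (a : ℕ → ℕ) (k : ℕ) : ℕ :=
  sInf {v | ∃ J : Finset ℕ, J ⊆ Finset.Icc 1 k ∧ 1 ∈ J ∧ k ∈ J ∧ v = a 2 + sFun a k J}

noncomputable def dVal (a : ℕ → ℕ) (k : ℕ) : ℕ :=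
  sInf {v | ∃ J : Finset ℕ, J ⊆ Finset.Icc 1 k ∧ 1 ∉ J ∧ k ∈ J ∧ v = a 3 + sFun a k J}

noncomputable def fVal (a : ℕ → ℕ) (k : ℕ) : ℕ :=
  sInf {v | ∃ J : Finset ℕ, J ⊆ Finset.Icc 1 k ∧ 1 ∈ J ∧ k ∉ J ∧ v = a 2 + sFun a k J}

noncomputable def gVal (a : ℕ → ℕ) (k : ℕ) : ℕ :=
  sInf {v | ∃ J : Finset ℕ, J ⊆ Finset.Icc 1 k ∧ 1 ∉ J ∧ k ∉ J ∧ v = a 3 + sFun a k J}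

theorem stmt16 (a : ℕ → ℕ) (ℓ : ℕ) (hℓ : 4 ≤ ℓ) (heven : Even ℓ)
    (k : ℕ) (hk : 2 ≤ k) (hk2 : k ≤ ℓ / 2) :
    cVal a k + gVal a k ≤ dVal a k + fVal a k := by
  classical
  -- d-set and f-set are nonempty; extract minimizers D, F
  have hdne : {v | ∃ J : Finset ℕ, J ⊆ Finset.Icc 1 k ∧ 1 ∉ J ∧ k ∈ J ∧
      v = a 3 + sFun a k J}.Nonempty := by
    refine ⟨a 3 + sFun a k {k}, {k}, ?_, ?_, ?_, rfl⟩
    · intro x hx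
      simp only [Finset.mem_singleton] at hx
      subst hx
      rw [Finset.mem_Icc]
      omega
    · simp only [Finset.mem_singleton]
      omega
    · simp
  have hfne : {v | ∃ J : Finset ℕ, J ⊆ Finset.Icc 1 k ∧ 1 ∈ J ∧ k ∉ J ∧
      v = a 2 + sFun a k J}.Nonempty := by
    refine ⟨a 2 + sFun a k {1}, {1}, ?_, ?_, ?_, rfl⟩
    · intro x hx
      simp only [Finset.mem_singleton] at hx
      subst hx
      rw [Finset.mem_Icc]
      omega
    · simp
    · simp only [Finset.mem_singleton]
      omega
  obtain ⟨D, hDsub, hD1, hDk, hDval⟩ := Nat.sInf_mem hdne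
  obtain ⟨F, hFsub, hF1, hFk, hFval⟩ := Nat.sInf_mem hfne
  -- crossing point t
  set S : Set ℕ := {j | 2 ≤ j ∧ (j ∈ D ∨ j ∉ F)} with hS
  have hkS : k ∈ S := ⟨hk, Or.inl hDk⟩
  set t := sInf S with hts
  have htmem : t ∈ S := Nat.sInf_mem ⟨k, hkS⟩
  have ht2 : 2 ≤ t := htmem.1
  have htDF : t ∈ D ∨ t ∉ F := htmem.2
  have htk : t ≤ k := Nat.sInf_le hkS
  have hlt : ∀ j, 1 ≤ j → j < t → j ∉ D ∧ j ∈ F := by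
    intro j h1 hj
    rcases eq_or_lt_of_le h1 with h | h
    · exact h ▸ ⟨hD1, hF1⟩
    · have := Nat.notMem_of_lt_sInf (s := S) hj
      simp only [hS, Set.mem_setOf_eq, not_and, not_or, not_not] at this
      exact this h
  -- splice sets
  set C : Finset ℕ := (F ∩ Finset.Icc 1 (t - 1)) ∪ (D ∩ Finset.Icc t k) with hC
  set G : Finset ℕ := (D ∩ Finset.Icc 1 (t - 1)) ∪ (F ∩ Finset.Icc t k) with hG
  have hCmem : ∀ j, j ∈ C ↔ (j ∈ F ∧ 1 ≤ j ∧ j ≤ t - 1) ∨ (j ∈ D ∧ t ≤ j ∧ j ≤ k) := by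
    intro j
    simp [hC, Finset.mem_Icc, and_assoc]
  have hGmem : ∀ j, j ∈ G ↔ (j ∈ D ∧ 1 ≤ j ∧ j ≤ t - 1) ∨ (j ∈ F ∧ t ≤ j ∧ j ≤ k) := by
    intro j
    simp [hG, Finset.mem_Icc, and_assoc]
  have hhead : ∀ i, 1 ≤ i → i < t → ((i ∈ C ↔ i ∈ F) ∧ (i ∈ G ↔ i ∈ D)) := by
    intro i h1 h2
    rw [hCmem, hGmem]
    refine ⟨⟨?_, ?_⟩, ?_, ?_⟩
    · rintro (⟨h, -, -⟩ | ⟨-, h, -⟩)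
      · exact h
      · exact absurd h (by omega)
    · intro h
      exact Or.inl ⟨h, h1, by omega⟩
    · rintro (⟨h, -, -⟩ | ⟨-, h, -⟩)
      · exact h
      · exact absurd h (by omega)
    · intro h
      exact Or.inl ⟨h, h1, by omega⟩
  have htail : ∀ i, t ≤ i → i ≤ k → ((i ∈ C ↔ i ∈ D) ∧ (i ∈ G ↔ i ∈ F)) := by
    intro i h1 h2
    rw [hCmem, hGmem]
    refine ⟨⟨?_, ?_⟩, ?_, ?_⟩
    · rintro (⟨-, -, h⟩ | ⟨h, -, -⟩)
      · exact absurd h (by omega)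
      · exact h
    · intro h
      exact Or.inr ⟨h, h1, h2⟩
    · rintro (⟨-, -, h⟩ | ⟨h, -, -⟩)
      · exact absurd h (by omega)
      · exact h
    · intro h
      exact Or.inr ⟨h, h1, h2⟩
  -- key sum inequality
  have hkey : sFun a k C + sFun a k G ≤ sFun a k D + sFun a k F := by
    unfold sFun
    rw [← Finset.sum_add_distrib, ← Finset.sum_add_distrib]
    apply Finset.sum_le_sum
    intro j hj
    rw [Finset.mem_Icc] at hj
    rcases lt_trichotomy j t with hjt | hjt | hjt
    · -- head: C agrees with F, G agrees with D at j and j-1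
      have h1 := hhead j (by omega) hjt
      have h2 := hhead (j - 1) (by omega) (by omega)
      simp only [h1.1, h1.2, h2.1, h2.2]
      exact le_of_eq (Nat.add_comm _ _)
    · -- crossing point j = t
      subst hjt
      have hT := htail t le_rfl hj.2
      have hj1 : t - 1 ∉ D ∧ t - 1 ∈ F := hlt (t - 1) (by omega) (by omega)
      have hH := hhead (t - 1) (by omega) (by omega)
      have hCj1 : t - 1 ∈ C := hH.1.mpr hj1.2
      have hGj1 : t - 1 ∉ G := fun h => hj1.1 (hH.2.mp h)
      simp only [hT.1, hT.2, if_pos hCj1, if_neg hGj1, if_neg hj1.1, if_pos hj1.2]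
      rcases htDF with hD | hF'
      · simp only [if_pos hD]
        split_ifs <;> omega
      · simp only [if_neg hF']
        split_ifs <;> omega
    · -- tail: C agrees with D, G agrees with F at j and j-1
      have h1 := htail j (by omega) hj.2
      have h2 := htail (j - 1) (by omega) (by omega)
      simp only [h1.1, h1.2, h2.1, h2.2]
      exact le_rfl
  -- C is a witness for c, G for g
  have hCsub : C ⊆ Finset.Icc 1 k := by
    intro x hx
    rw [hCmem] at hx
    rw [Finset.mem_Icc]
    rcases hx with ⟨_, h1, h2⟩ | ⟨_, h1, h2⟩ <;> omega
  have hGsub : G ⊆ Finset.Icc 1 k := by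
    intro x hx
    rw [hGmem] at hx
    rw [Finset.mem_Icc]
    rcases hx with ⟨_, h1, h2⟩ | ⟨_, h1, h2⟩ <;> omega
  have hC1 : 1 ∈ C := (hhead 1 le_rfl (by omega)).1.mpr hF1
  have hCk : k ∈ C := (htail k htk le_rfl).1.mpr hDk
  have hG1 : 1 ∉ G := fun h => hD1 ((hhead 1 le_rfl (by omega)).2.mp h)
  have hGk : k ∉ G := fun h => hFk ((htail k htk le_rfl).2.mp h)
  have hc : cVal a k ≤ a 2 + sFun a k C := Nat.sInf_le ⟨C, hCsub, hC1, hCk, rfl⟩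
  have hg : gVal a k ≤ a 3 + sFun a k G := Nat.sInf_le ⟨G, hGsub, hG1, hGk, rfl⟩
  rw [show dVal a k = a 3 + sFun a k D from hDval, show fVal a k = a 2 + sFun a k F from hFval]
  omega
end

section
/- Let b_1 ≤ b_2 ≤ ... ≤ b_ℓ be nonnegative integers with ℓ ≥ 4 even, and define s_k, c_k, g_k as in the combinatorial setup with a_i = b_i. Then c_{ℓ/2} = Σ_{j=1}^{ℓ/2} b_{2j} and g_{ℓ/2} = Σ_{j=1}^{ℓ/2} b_{2j+1} (with b_{ℓ+1} = b_1), and consequently the maximum of N_1 + ... + N_ℓ over nonnegative integers N_i satisfying the cyclic constraints N_i + N_{i+1} ≤ b_{i+1} (indices mod ℓ) equals Σ_{j=0}^{(ℓ-2)/2} b_{2j+1}. -/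
private lemma sum_pull_one (f : ℕ → ℕ) (K : ℕ) (h : 1 ≤ K) :
    ∑ j ∈ Finset.Icc 1 K, f j = f 1 + ∑ j ∈ Finset.Icc 2 K, f j := by
  have : Finset.Icc 1 K = insert 1 (Finset.Icc 2 K) := by
    ext x; simp [Finset.mem_Icc, Finset.mem_insert]; omega
  rw [this, Finset.sum_insert (by simp [Finset.mem_Icc])]

private lemma sum_if_odd (b : ℕ → ℕ) (K : ℕ) :
    ∑ i ∈ Finset.Icc 1 (2 * K), (if Odd i then b i else 0) =
      ∑ j ∈ Finset.range K, b (2 * j + 1) := by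
  induction K with
  | zero => simp
  | succ n ih =>
    have h1 : 2 * (n + 1) = (2 * n + 1) + 1 := by ring
    rw [h1, Finset.sum_Icc_succ_top (by omega), Finset.sum_Icc_succ_top (by omega), ih,
      Finset.sum_range_succ]
    have ho : Odd (2 * n + 1) := ⟨n, by ring⟩
    have he : ¬ Odd (2 * n + 1 + 1) := by
      simp [Nat.not_odd_iff_even]; exact ⟨n + 1, by ring⟩
    rw [if_pos ho, if_neg he]
    ring

private lemma sum_pair_split (g : ℕ → ℕ) (K : ℕ) (h : 1 ≤ K) :
    ∑ i ∈ Finset.Icc 1 (2 * K), g i =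
      g 1 + g (2 * K) + ∑ j ∈ Finset.range (K - 1), (g (2 * j + 2) + g (2 * j + 3)) := by
  induction K, h using Nat.le_induction with
  | base => simp [Finset.sum_Icc_succ_top, show (1:ℕ) ≤ 2 by omega]
  | succ n hn ih =>
    have h1 : 2 * (n + 1) = (2 * n + 1) + 1 := by ring
    rw [h1, Finset.sum_Icc_succ_top (by omega), Finset.sum_Icc_succ_top (by omega), ih]
    have h2 : n + 1 - 1 = (n - 1) + 1 := by omega
    rw [h2, Finset.sum_range_succ]
    have h3 : 2 * (n - 1) + 2 = 2 * n := by omega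
    have h4 : 2 * (n - 1) + 3 = 2 * n + 1 := by omega
    rw [h3, h4]
    ring

/-- Key induction for the gVal lower bound. -/
private lemma gLow (b : ℕ → ℕ) (K : ℕ)
    (hmin : ∀ j, 2 ≤ j → j ≤ K → b (2 * j - 1) ≤ b (2 * j)) :
    ∀ k, 1 ≤ k → k ≤ K → ∀ J : Finset ℕ, 1 ∉ J →
      (∑ j ∈ Finset.Icc 2 k, b (2 * j + 1)) ≤
        (∑ j ∈ Finset.Icc 2 k,
          (if j ∈ J then b (2 * j)
           else b (2 * j + 1) + if j - 1 ∈ J then min (b (2 * j - 1)) (b (2 * j)) else 0))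
        + (if k ∈ J then b (2 * k + 1) else 0) := by
  intro k hk1
  induction k, hk1 using Nat.le_induction with
  | base =>
    intro _ J h1
    simp [Finset.Icc_eq_empty_of_lt, h1]
  | succ k hk ih =>
    intro hkK J h1
    have h2k : 2 ≤ k + 1 := by omega
    rw [Finset.sum_Icc_succ_top h2k, Finset.sum_Icc_succ_top h2k]
    have IH := ih (by omega) J h1
    have hminval : min (b (2 * (k+1) - 1)) (b (2 * (k+1))) = b (2 * (k+1) - 1) :=
      min_eq_left (hmin (k+1) h2k hkK)
    have hsucc : (k+1) - 1 = k := by omega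
    by_cases hK1 : (k+1) ∈ J
    · by_cases hKk : k ∈ J
      · simp only [if_pos hK1, if_pos hKk] at *
        have hstep : b (2 * k + 1) ≤ b (2 * (k+1)) := by
          have := hmin (k+1) h2k hkK
          have heq : 2 * (k+1) - 1 = 2 * k + 1 := by omega
          rwa [heq] at this
        omega
      · simp only [if_pos hK1, if_neg hKk] at *
        omega
    · by_cases hKk : k ∈ J
      · simp only [if_neg hK1, if_pos hKk, hsucc, hminval] at *
        have heq : 2 * (k+1) - 1 = 2 * k + 1 := by omega
        rw [heq] at *
        omega
      · simp only [if_neg hK1, if_neg hKk, hsucc] at *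
        omega

theorem stmt17 (b : ℕ → ℕ) (ℓ : ℕ) (hℓ : 4 ≤ ℓ) (heven : Even ℓ)
    (hmono : ∀ i, 1 ≤ i → i < ℓ → b i ≤ b (i + 1)) (hcyc : b (ℓ + 1) = b 1) :
    cVal b (ℓ / 2) = ∑ j ∈ Finset.Icc 1 (ℓ / 2), b (2 * j) ∧
      gVal b (ℓ / 2) = ∑ j ∈ Finset.Icc 1 (ℓ / 2), b (2 * j + 1) ∧
      IsGreatest {s : ℕ | ∃ Nf : ℕ → ℕ, s = ∑ i ∈ Finset.Icc 1 ℓ, Nf i ∧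
          ∀ i ∈ Finset.Icc 1 ℓ, Nf i + Nf (i % ℓ + 1) ≤ b (i % ℓ + 1)}
        (∑ j ∈ Finset.range (ℓ / 2), b (2 * j + 1)) := by
  obtain ⟨K, hKℓ⟩ := heven
  have hKℓ : ℓ = 2 * K := by omega
  have hK2 : 2 ≤ K := by omega
  have hdiv : ℓ / 2 = K := by omega
  subst hKℓ
  rw [hdiv]
  refine ⟨?_, ?_, ?_⟩
  · -- cVal
    apply le_antisymm
    · apply Nat.sInf_le
      refine ⟨Finset.Icc 1 K, le_refl _, Finset.mem_Icc.mpr ⟨le_refl 1, by omega⟩,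
        Finset.mem_Icc.mpr ⟨by omega, le_refl K⟩, ?_⟩
      rw [sum_pull_one (fun j => b (2 * j)) K (by omega)]
      have h2 : b 2 = b (2 * 1) := by norm_num
      rw [h2]
      congr 1
      unfold sFun
      apply Finset.sum_congr rfl
      intro j hj
      rw [Finset.mem_Icc] at hj
      rw [if_pos (Finset.mem_Icc.mpr ⟨by omega, hj.2⟩)]
    · apply le_csInf
      · exact ⟨b 2 + sFun b K (Finset.Icc 1 K), Finset.Icc 1 K, le_refl _,
          Finset.mem_Icc.mpr ⟨le_refl 1, by omega⟩, Finset.mem_Icc.mpr ⟨by omega, le_refl K⟩, rfl⟩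
      rintro v ⟨J, hJsub, h1J, hKJ, rfl⟩
      rw [sum_pull_one (fun j => b (2 * j)) K (by omega)]
      have h2 : b (2 * 1) = b 2 := by norm_num
      rw [h2]
      unfold sFun
      gcongr (?_ + ?_)
      · exact le_refl (b 2)
      apply Finset.sum_le_sum
      intro j hj
      rw [Finset.mem_Icc] at hj
      by_cases hjJ : j ∈ J
      · rw [if_pos hjJ]
      · rw [if_neg hjJ]
        have hjK : j < K := lt_of_le_of_ne hj.2 (fun h => hjJ (h ▸ hKJ))
        have := hmono (2 * j) (by omega) (by omega)
        omega
  · -- gVal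
    apply le_antisymm
    · apply Nat.sInf_le
      refine ⟨∅, by simp, by simp, by simp, ?_⟩
      rw [sum_pull_one (fun j => b (2 * j + 1)) K (by omega)]
      have h3 : b (2 * 1 + 1) = b 3 := by norm_num
      rw [h3]
      have : sFun b K (∅ : Finset ℕ) = ∑ j ∈ Finset.Icc 2 K, b (2 * j + 1) := by
        simp [sFun]
      rw [this]
    · apply le_csInf
      · exact ⟨b 3 + sFun b K ∅, ∅, by simp, by simp, by simp, rfl⟩
      rintro v ⟨J, hJsub, h1J, hKJ, rfl⟩
      rw [sum_pull_one (fun j => b (2 * j + 1)) K (by omega)]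
      have h3 : b (2 * 1 + 1) = b 3 := by norm_num
      rw [h3]
      have key := gLow b K (fun j h2 hK => by
          have h := hmono (2 * j - 1) (by omega) (by omega)
          have he : 2 * j - 1 + 1 = 2 * j := by omega
          rwa [he] at h) K (by omega) (by omega) J h1J
      rw [if_neg hKJ, add_zero] at key
      unfold sFun
      omega
  · constructor
    · -- membership
      refine ⟨fun i => if Odd i then b i else 0, (sum_if_odd b K).symm, ?_⟩
      intro i hi
      rw [Finset.mem_Icc] at hi
      by_cases hiℓ : i < 2 * K
      · have hmod : i % (2 * K) = i := Nat.mod_eq_of_lt hiℓ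
        rw [hmod]
        by_cases hodd : Odd i
        · have hne : ¬ Odd (i + 1) := by simp [Nat.odd_add_one, hodd]
          simp only [if_pos hodd, if_neg hne, add_zero]
          exact hmono i hi.1 hiℓ
        · have hsucc : Odd (i + 1) := Nat.odd_add_one.mpr (by simpa using hodd)
          simp [if_neg hodd, if_pos hsucc]
      · have hieq : i = 2 * K := by omega
        subst hieq
        rw [Nat.mod_self]
        have hne : ¬ Odd (2 * K) := by simp [Nat.not_odd_iff_even, even_two_mul]
        simp [hne]
    · -- upper bound
      rintro s ⟨Nf, rfl, hcon⟩
      rw [sum_pair_split Nf K (by omega)]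
      have htarget : ∑ j ∈ Finset.range K, b (2 * j + 1) =
          (∑ j ∈ Finset.range (K - 1), b (2 * (j + 1) + 1)) + b (2 * 0 + 1) := by
        have hK1 : K = (K - 1) + 1 := by omega
        have h := Finset.sum_range_succ' (fun j => b (2 * j + 1)) (K - 1)
        rw [← hK1] at h
        exact h
      rw [htarget]
      have hlast : Nf (2 * K) + Nf 1 ≤ b 1 := by
        have h := hcon (2 * K) (Finset.mem_Icc.mpr ⟨by omega, le_refl _⟩)
        rwa [Nat.mod_self] at h
      have hpairs : ∑ j ∈ Finset.range (K - 1), (Nf (2 * j + 2) + Nf (2 * j + 3)) ≤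
          ∑ j ∈ Finset.range (K - 1), b (2 * (j + 1) + 1) := by
        apply Finset.sum_le_sum
        intro j hj
        rw [Finset.mem_range] at hj
        have h := hcon (2 * j + 2) (Finset.mem_Icc.mpr ⟨by omega, by omega⟩)
        rw [Nat.mod_eq_of_lt (by omega)] at h
        have he : 2 * (j + 1) + 1 = 2 * j + 3 := by ring
        rw [he]
        exact h
      have hb0 : b (2 * 0 + 1) = b 1 := by norm_num
      rw [hb0]
      omega
end
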